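/- Let X_1,…,X_n be pairwise commuting operators on a finite-dimensional complex vector space E, λ ∈ ℂⁿ, and assume that for every ℓ the space E decomposes as E = ker(X_ℓ − λ_ℓ id) ⊕ im(X_ℓ − λ_ℓ id). Then every cocycle of the Koszul complex K*(X−λ, E) is cohomologous to a cocycle with values in the joint kernel ∩_ℓ ker(X_ℓ − λ_ℓ id), i.e. to an element of (∩_ℓ ker(X_ℓ − λ_ℓ id)) ⊗ Λ. -/

import Mathlib

/-- Creation operator `e_{η_l}` on the exterior algebra on `n` generators. -/
noncomputable def creationOp (F : Type*) [Field F] (n : ℕ) (l : Fin n) :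
    ExteriorAlgebra F (Fin n → F) →ₗ[F] ExteriorAlgebra F (Fin n → F) :=
  LinearMap.mulLeft F (ExteriorAlgebra.ι F (Pi.single l 1))

/-- The (total) Koszul differential `𝒦 = Σ_j (X_j − λ_j id) ⊗ e_{η_j}` on `E ⊗ Λℂⁿ`. -/
noncomputable def koszulOp {E : Type*} [AddCommGroup E] [Module ℂ E] (n : ℕ)
    (X : Fin n → Module.End ℂ E) (lam : Fin n → ℂ) :
    TensorProduct ℂ E (ExteriorAlgebra ℂ (Fin n → ℂ)) →ₗ[ℂ]
      TensorProduct ℂ E (ExteriorAlgebra ℂ (Fin n → ℂ)) :=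
  ∑ j, TensorProduct.map (X j - lam j • 1) (creationOp ℂ n j)

/-- Annihilation operator (interior product with the `l`-th coordinate functional). -/
noncomputable def annOp (n : ℕ) (l : Fin n) :
    ExteriorAlgebra ℂ (Fin n → ℂ) →ₗ[ℂ] ExteriorAlgebra ℂ (Fin n → ℂ) :=
  CliffordAlgebra.contractLeft (Q := (0 : QuadraticForm ℂ (Fin n → ℂ))) (LinearMap.proj l)

lemma ann_creation (n : ℕ) (j l : Fin n) :
    annOp n l * creationOp ℂ n j + creationOp ℂ n j * annOp n l
      = ((Pi.single j (1:ℂ) : Fin n → ℂ) l) •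
          (1 : Module.End ℂ (ExteriorAlgebra ℂ (Fin n → ℂ))) := by
  refine LinearMap.ext fun x => ?_
  simp [annOp, creationOp, Module.End.mul_apply, LinearMap.mulLeft_apply,
    CliffordAlgebra.contractLeft_ι_mul]

lemma creation_creation (n : ℕ) (j k : Fin n) :
    creationOp ℂ n j * creationOp ℂ n k + creationOp ℂ n k * creationOp ℂ n j = 0 := by
  refine LinearMap.ext fun x => ?_
  simp only [creationOp, LinearMap.add_apply, Module.End.mul_apply, LinearMap.mulLeft_apply,
    LinearMap.zero_apply, ← mul_assoc, ← add_mul]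
  rw [ExteriorAlgebra.ι_add_mul_swap, zero_mul]

lemma map_mul_map {E : Type*} [AddCommGroup E] [Module ℂ E]
    (n : ℕ) (f g : Module.End ℂ E)
    (p q : Module.End ℂ (ExteriorAlgebra ℂ (Fin n → ℂ))) :
    (TensorProduct.map f p) * (TensorProduct.map g q) = TensorProduct.map (f * g) (p * q) := by
  rw [Module.End.mul_eq_comp, Module.End.mul_eq_comp, Module.End.mul_eq_comp,
    TensorProduct.map_comp]

lemma koszul_sq_zero {E : Type*} [AddCommGroup E] [Module ℂ E] (n : ℕ)
    (X : Fin n → Module.End ℂ E) (hX : ∀ k l, X k * X l = X l * X k) (lam : Fin n → ℂ) :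
    koszulOp n X lam * koszulOp n X lam = 0 := by
  have hY : ∀ k l : Fin n, (X k - lam k • 1) * (X l - lam l • 1)
      = (X l - lam l • 1) * (X k - lam k • 1) := by
    intro k l
    have c1 : Commute (X k) (X l) := hX k l
    have c3 : Commute (X k - lam k • 1) (X l) :=
      c1.sub_left ((Commute.one_left (X l)).smul_left (lam k))
    exact (c3.sub_right ((Commute.one_right (X k - lam k • 1)).smul_right (lam l)))
  rw [koszulOp, Finset.sum_mul_sum]
  simp_rw [map_mul_map]
  have key : (2:ℂ) • (∑ j : Fin n, ∑ k : Fin n, TensorProduct.map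
      ((X j - lam j • 1) * (X k - lam k • 1)) (creationOp ℂ n j * creationOp ℂ n k)) = 0 := by
    rw [two_smul]
    nth_rewrite 2 [Finset.sum_comm]
    simp_rw [← Finset.sum_add_distrib]
    refine Finset.sum_eq_zero fun j _ => Finset.sum_eq_zero fun k _ => ?_
    rw [hY k j, ← TensorProduct.map_add_right, creation_creation, TensorProduct.map_zero_right]
  have h2 := congrArg (fun T => (2:ℂ)⁻¹ • T) key
  simpa [smul_smul, (by norm_num : ((2:ℂ)⁻¹ * 2) = 1)] using h2

lemma homotopy {E : Type*} [AddCommGroup E] [Module ℂ E] (n : ℕ)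
    (X : Fin n → Module.End ℂ E) (lam : Fin n → ℂ) (a : Fin n) (Z : Module.End ℂ E)
    (hcomm : ∀ j, Z * (X j - lam j • 1) = (X j - lam j • 1) * Z) :
    koszulOp n X lam * TensorProduct.map Z (annOp n a)
      + TensorProduct.map Z (annOp n a) * koszulOp n X lam
      = TensorProduct.map ((X a - lam a • 1) * Z)
          (LinearMap.id (R := ℂ) (M := ExteriorAlgebra ℂ (Fin n → ℂ))) := by
  rw [koszulOp, Finset.sum_mul, Finset.mul_sum, ← Finset.sum_add_distrib]
  have step : ∀ j : Fin n,
      TensorProduct.map (X j - lam j • 1) (creationOp ℂ n j) * TensorProduct.map Z (annOp n a)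
        + TensorProduct.map Z (annOp n a) * TensorProduct.map (X j - lam j • 1) (creationOp ℂ n j)
      = ((Pi.single j (1:ℂ) : Fin n → ℂ) a) •
          TensorProduct.map ((X j - lam j • 1) * Z)
            (LinearMap.id (R := ℂ) (M := ExteriorAlgebra ℂ (Fin n → ℂ))) := by
    intro j
    rw [map_mul_map, map_mul_map, hcomm j, ← TensorProduct.map_add_right, add_comm
      (creationOp ℂ n j * annOp n a), ann_creation, TensorProduct.map_smul_right]
    congr 1
  simp_rw [step, Pi.single_apply, ite_smul, one_smul, zero_smul]
  simp

lemma exists_Z {E : Type*} [AddCommGroup E] [Module ℂ E] [FiniteDimensional ℂ E]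
    {ι : Type*} (Y : ι → Module.End ℂ E) (a : ι)
    (hcomm : ∀ k, Y a * Y k = Y k * Y a)
    (hcompl : IsCompl (LinearMap.ker (Y a)) (LinearMap.range (Y a))) :
    ∃ Z : Module.End ℂ E, (∀ k, Z * Y k = Y k * Z) ∧
      ∀ v : E, (Y a) (v - (Y a * Z) v) = 0 := by
  have hmaps : ∀ x ∈ LinearMap.range (Y a), Y a x ∈ LinearMap.range (Y a) :=
    fun x _ => LinearMap.mem_range_self _ x
  set f := (Y a).restrict hmaps with hf
  have hinjR : ∀ u ∈ LinearMap.range (Y a), ∀ w ∈ LinearMap.range (Y a),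
      Y a u = Y a w → u = w := by
    intro u hu w hw h
    have h1 : u - w ∈ LinearMap.ker (Y a) := by
      simp [LinearMap.mem_ker, map_sub, h]
    have h2 : u - w ∈ LinearMap.range (Y a) := sub_mem hu hw
    have h0 := Submodule.disjoint_def.mp hcompl.disjoint _ h1 h2
    exact sub_eq_zero.mp h0
  have hfinj : Function.Injective f := by
    intro u w h
    have h' : Y a (u : E) = Y a (w : E) := congrArg Subtype.val h
    exact Subtype.ext (hinjR _ u.2 _ w.2 h')
  have hfsurj : Function.Surjective f := LinearMap.injective_iff_surjective.mp hfinj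
  set e := LinearEquiv.ofBijective f ⟨hfinj, hfsurj⟩ with he
  set pr := Submodule.projectionOnto _ _ hcompl.symm with hpr
  set Z : Module.End ℂ E :=
    (LinearMap.range (Y a)).subtype ∘ₗ (e.symm : _ →ₗ[ℂ] _) ∘ₗ pr with hZ
  have hZapp : ∀ v : E, Z v = ((e.symm (pr v) : LinearMap.range (Y a)) : E) := fun v => rfl
  have hZmem : ∀ v : E, Z v ∈ LinearMap.range (Y a) := fun v => by
    rw [hZapp]; exact (e.symm (pr v)).2
  have hfval : ∀ u : LinearMap.range (Y a), ((f u : LinearMap.range (Y a)) : E) = Y a (u : E) :=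
    fun u => rfl
  have hYZ : ∀ v : E, Y a (Z v) = ((pr v : LinearMap.range (Y a)) : E) := by
    intro v
    rw [hZapp, ← hfval]
    congr 1
    exact e.apply_symm_apply (pr v)
  have hZker : ∀ v ∈ LinearMap.ker (Y a), Z v = 0 := by
    intro v hv
    rw [hZapp, Submodule.linearProjOfIsCompl_apply_right' hcompl.symm hv]
    simp
  have hYZR : ∀ v ∈ LinearMap.range (Y a), Y a (Z v) = v := by
    intro v hv
    rw [hYZ]
    have := Submodule.linearProjOfIsCompl_apply_left hcompl.symm ⟨v, hv⟩
    rw [hpr]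
    exact congrArg Subtype.val this
  have hdecomp : ∀ v : E, v ∈ LinearMap.ker (Y a) ⊔ LinearMap.range (Y a) := by
    intro v; rw [hcompl.sup_eq_top]; trivial
  have hstlK : ∀ (k) (w), w ∈ LinearMap.ker (Y a) → Y k w ∈ LinearMap.ker (Y a) := by
    intro k w hw
    have : (Y a * Y k) w = (Y k * Y a) w := by rw [hcomm k]
    simp only [Module.End.mul_apply] at this
    simp only [LinearMap.mem_ker] at hw ⊢
    rw [this, hw, map_zero]
  have hstlR : ∀ (k) (w), w ∈ LinearMap.range (Y a) → Y k w ∈ LinearMap.range (Y a) := by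
    rintro k w ⟨u, rfl⟩
    refine ⟨Y k u, ?_⟩
    have : (Y a * Y k) u = (Y k * Y a) u := by rw [hcomm k]
    simpa only [Module.End.mul_apply] using this
  refine ⟨Z, ?_, ?_⟩
  · intro k
    refine LinearMap.ext fun v => ?_
    obtain ⟨x, hx, y, hy, rfl⟩ := Submodule.mem_sup.mp (hdecomp v)
    simp only [Module.End.mul_apply, map_add]
    rw [hZker x hx, hZker _ (hstlK k x hx), map_zero, zero_add, zero_add]
    refine hinjR _ (hZmem _) _ (hstlR k _ (hZmem y)) ?_
    rw [hYZR _ (hstlR k y hy)]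
    have h1 : (Y a * Y k) (Z y) = (Y k * Y a) (Z y) := by rw [hcomm k]
    simp only [Module.End.mul_apply] at h1
    rw [h1, hYZR y hy]
  · intro v
    obtain ⟨x, hx, y, hy, rfl⟩ := Submodule.mem_sup.mp (hdecomp v)
    simp only [Module.End.mul_apply, map_add, map_sub]
    rw [hZker x hx, map_zero, hYZR y hy]
    simp only [LinearMap.mem_ker] at hx
    rw [hx, map_zero]
    abel

lemma map_one_sub_apply {E : Type*} [AddCommGroup E] [Module ℂ E] (n : ℕ)
    (f : Module.End ℂ E) (t : TensorProduct ℂ E (ExteriorAlgebra ℂ (Fin n → ℂ))) :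
    TensorProduct.map (1 - f)
        (LinearMap.id (R := ℂ) (M := ExteriorAlgebra ℂ (Fin n → ℂ))) t
      = t - TensorProduct.map f LinearMap.id t := by
  have h : TensorProduct.map (1 - f)
      (LinearMap.id (R := ℂ) (M := ExteriorAlgebra ℂ (Fin n → ℂ)))
      = LinearMap.id - TensorProduct.map f LinearMap.id := by
    apply TensorProduct.ext'
    intro x y
    simp [TensorProduct.sub_tmul]
  rw [h]
  simp

/-- If for each `l` the kernel and the image of `X_l − λ_l id` are supplementary in `E`,
then every Koszul cocycle is cohomologous to a cocycle with values in the joint kernel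
`∩_l ker(X_l − λ_l id)`. -/
theorem koszul_cocycle_reduction_to_joint_kernel {E : Type*} [AddCommGroup E]
    [Module ℂ E] [FiniteDimensional ℂ E] (n : ℕ)
    (X : Fin n → Module.End ℂ E)
    (hX : ∀ k l, X k * X l = X l * X k)
    (lam : Fin n → ℂ)
    (hsupp : ∀ l, IsCompl (LinearMap.ker (X l - lam l • 1))
      (LinearMap.range (X l - lam l • 1))) :
    ∀ c : TensorProduct ℂ E (ExteriorAlgebra ℂ (Fin n → ℂ)),
      koszulOp n X lam c = 0 →
      ∃ b, c - koszulOp n X lam b ∈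
        LinearMap.range (TensorProduct.map
          (⨅ l, LinearMap.ker (X l - lam l • 1)).subtype
          (LinearMap.id (R := ℂ) (M := ExteriorAlgebra ℂ (Fin n → ℂ)))) := by
  intro c hc
  have hYcomm : ∀ k l : Fin n, (X k - lam k • 1) * (X l - lam l • 1)
      = (X l - lam l • 1) * (X k - lam k • 1) := by
    intro k l
    have c1 : Commute (X k) (X l) := hX k l
    have c3 : Commute (X k - lam k • 1) (X l) :=
      c1.sub_left ((Commute.one_left (X l)).smul_left (lam k))
    exact (c3.sub_right ((Commute.one_right (X k - lam k • 1)).smul_right (lam l)))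
  have hZex : ∀ a : Fin n, ∃ Z : Module.End ℂ E,
      (∀ k, Z * (X k - lam k • 1) = (X k - lam k • 1) * Z) ∧
      ∀ v : E, (X a - lam a • 1) (v - ((X a - lam a • 1) * Z) v) = 0 := by
    intro a
    obtain ⟨Z, h1, h2⟩ := exists_Z (fun l => X l - lam l • 1) a
      (fun k => hYcomm a k) (hsupp a)
    exact ⟨Z, h1, h2⟩
  choose Z hZcomm hZP using hZex
  have hsq := koszul_sq_zero n X hX lam
  have main : ∀ S : Finset (Fin n), ∀ c, koszulOp n X lam c = 0 →
      ∃ b, koszulOp n X lam (c - koszulOp n X lam b) = 0 ∧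
        c - koszulOp n X lam b ∈ LinearMap.range (TensorProduct.map
          (⨅ l ∈ S, LinearMap.ker (X l - lam l • 1)).subtype
          (LinearMap.id (R := ℂ) (M := ExteriorAlgebra ℂ (Fin n → ℂ)))) := by
    intro S
    induction S using Finset.induction_on with
    | empty =>
      intro c hc
      refine ⟨0, by simpa using hc, ?_⟩
      have hsurj : Function.Surjective
          ((⨅ l ∈ (∅ : Finset (Fin n)), LinearMap.ker (X l - lam l • 1)).subtype) :=
        fun x => ⟨⟨x, by simp⟩, rfl⟩
      have hs2 : Function.Surjective
          (LinearMap.id (R := ℂ) (M := ExteriorAlgebra ℂ (Fin n → ℂ))) := fun x => ⟨x, rfl⟩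
      obtain ⟨d, hd⟩ := TensorProduct.map_surjective hsurj hs2 (c - koszulOp n X lam 0)
      exact ⟨d, hd⟩
    | @insert a S ha IH =>
      intro c hc
      obtain ⟨b, hb0, d, hd⟩ := IH c hc
      set c₁ := c - koszulOp n X lam b with hc₁
      set H := TensorProduct.map (Z a) (annOp n a) with hH
      have happ := DFunLike.congr_fun (homotopy n X lam a (Z a) (hZcomm a)) c₁
      simp only [LinearMap.add_apply, Module.End.mul_apply] at happ
      rw [hb0, map_zero, add_zero] at happ
      have hc₂ : c₁ - koszulOp n X lam (H c₁)
          = TensorProduct.map (1 - (X a - lam a • 1) * Z a) LinearMap.id c₁ := by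
        rw [happ, map_one_sub_apply]
      have hPcommL : ∀ l : Fin n, (X l - lam l • 1) * (1 - (X a - lam a • 1) * Z a)
          = (1 - (X a - lam a • 1) * Z a) * (X l - lam l • 1) := by
        intro l
        have h1 : (X l - lam l • 1) * ((X a - lam a • 1) * Z a)
            = ((X a - lam a • 1) * Z a) * (X l - lam l • 1) := by
          calc (X l - lam l • 1) * ((X a - lam a • 1) * Z a)
              = ((X l - lam l • 1) * (X a - lam a • 1)) * Z a := by rw [mul_assoc]
            _ = ((X a - lam a • 1) * (X l - lam l • 1)) * Z a := by rw [hYcomm l a]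
            _ = (X a - lam a • 1) * ((X l - lam l • 1) * Z a) := by rw [mul_assoc]
            _ = (X a - lam a • 1) * (Z a * (X l - lam l • 1)) := by rw [hZcomm a l]
            _ = ((X a - lam a • 1) * Z a) * (X l - lam l • 1) := by rw [mul_assoc]
        calc (X l - lam l • 1) * (1 - (X a - lam a • 1) * Z a)
            = (X l - lam l • 1) - (X l - lam l • 1) * ((X a - lam a • 1) * Z a) := by
              rw [mul_one_sub]
          _ = (X l - lam l • 1) - ((X a - lam a • 1) * Z a) * (X l - lam l • 1) := by rw [h1]
          _ = (1 - (X a - lam a • 1) * Z a) * (X l - lam l • 1) := by rw [one_sub_mul]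
      have hPmem : ∀ v : E, v ∈ (⨅ l ∈ S, LinearMap.ker (X l - lam l • 1)) →
          (1 - (X a - lam a • 1) * Z a) v
            ∈ (⨅ l ∈ insert a S, LinearMap.ker (X l - lam l • 1)) := by
        intro v hv
        simp only [Submodule.mem_iInf] at hv ⊢
        intro l hl
        rcases Finset.mem_insert.mp hl with rfl | hl
        · simp only [LinearMap.mem_ker, LinearMap.sub_apply, Module.End.one_apply]
          simpa using hZP l v
        · have hvl := hv l hl
          simp only [LinearMap.mem_ker] at hvl ⊢
          have hcl := DFunLike.congr_fun (hPcommL l) v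
          simp only [Module.End.mul_apply] at hcl
          rw [hcl, hvl, map_zero]
      have hPmem' : ∀ v : ↥(⨅ l ∈ S, LinearMap.ker (X l - lam l • 1)),
          ((1 - (X a - lam a • 1) * Z a) ∘ₗ
            (⨅ l ∈ S, LinearMap.ker (X l - lam l • 1)).subtype) v
            ∈ (⨅ l ∈ insert a S, LinearMap.ker (X l - lam l • 1)) := by
        intro v
        simpa using hPmem v v.2
      have h1 : c - koszulOp n X lam (b + H c₁) = c₁ - koszulOp n X lam (H c₁) := by
        rw [map_add, hc₁]
        abel
      refine ⟨b + H c₁, ?_, ?_⟩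
      · rw [h1, map_sub, hb0]
        have h2 := DFunLike.congr_fun hsq (H c₁)
        simp only [Module.End.mul_apply, LinearMap.zero_apply] at h2
        rw [h2, sub_zero]
      · rw [h1, hc₂, ← hd]
        refine ⟨TensorProduct.map (LinearMap.codRestrict _ _ hPmem') LinearMap.id d, ?_⟩
        rw [← LinearMap.comp_apply, ← LinearMap.comp_apply, ← TensorProduct.map_comp,
          ← TensorProduct.map_comp, LinearMap.subtype_comp_codRestrict]
  obtain ⟨b, _, hmem⟩ := main Finset.univ c hc
  have hiInf : (⨅ l ∈ (Finset.univ : Finset (Fin n)), LinearMap.ker (X l - lam l • 1))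
      = ⨅ l, LinearMap.ker (X l - lam l • 1) := by simp
  rw [hiInf] at hmem
  exact ⟨b, hmem⟩
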